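/- Let 𝔤 be a complex Lie algebra with involution θ and Cartan decomposition 𝔤 = 𝔨 ⊕ 𝔭. For each z ∈ ℂ define a bracket on 𝔤 by [x,y]_z = z·[x,y] if x,y ∈ 𝔭, and [x,y]_z = [x,y] otherwise (extended bilinearly using the decomposition). Then for every z ∈ ℂ, [·,·]_z satisfies the Jacobi identity and antisymmetry, i.e. (𝔤, [·,·]_z) is a Lie algebra. -/

import Mathlib

/-- Given an involution θ of a complex Lie algebra 𝔤 with Cartan
decomposition 𝔤 = 𝔨 ⊕ 𝔭 (projections k(x) = (x+θx)/2, p(x) = (x−θx)/2), the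
contracted bracket [x,y]_z = [k x, k y] + [k x, p y] + [p x, k y] + z[p x, p y]
is antisymmetric and satisfies the Jacobi (Leibniz) identity for every z ∈ ℂ. -/
theorem stmt_1 (L : Type*) [LieRing L] [LieAlgebra ℂ L]
    (θ : L →ₗ⁅ℂ⁆ L) (hθ : ∀ x, θ (θ x) = x) (z : ℂ) :
    let k : L → L := fun x => (2⁻¹ : ℂ) • (x + θ x)
    let p : L → L := fun x => (2⁻¹ : ℂ) • (x - θ x)
    let bz : L → L → L := fun x y =>
      ⁅k x, k y⁆ + ⁅k x, p y⁆ + ⁅p x, k y⁆ + z • ⁅p x, p y⁆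
    (∀ x y : L, bz x y = - bz y x) ∧
    (∀ x y w : L, bz x (bz y w) = bz (bz x y) w + bz y (bz x w)) := by
  intro k p bz
  have hkbz : ∀ y w, k (bz y w) = ⁅k y, k w⁆ + z • ⁅p y, p w⁆ := by
    intro y w
    simp only [k, p, bz, map_add, map_sub, map_smul, LieHom.map_lie, hθ,
      lie_add, add_lie, lie_sub, sub_lie, lie_smul, smul_lie]
    module
  have hpbz : ∀ y w, p (bz y w) = ⁅k y, p w⁆ + ⁅p y, k w⁆ := by
    intro y w
    simp only [k, p, bz, map_add, map_sub, map_smul, LieHom.map_lie, hθ,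
      lie_add, add_lie, lie_sub, sub_lie, lie_smul, smul_lie]
    module
  constructor
  · intro x y
    simp only [bz, ← lie_skew (k y), ← lie_skew (p y)]
    module
  · intro x y w
    show bz x (bz y w) = bz (bz x y) w + bz y (bz x w)
    simp only [bz] at hkbz hpbz ⊢
    rw [hkbz, hpbz, hkbz, hpbz, hkbz, hpbz]
    simp only [lie_add, add_lie, lie_smul, smul_lie, lie_lie, lie_sub, sub_lie]
    module
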